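/- Let E be a Krull–Schmidt exact category with enough projectives P and let T be a τ-rigid subcategory of E satisfying condition (A). For each Q ∈ P fix an exact sequence Q →f T' ↠ C with f a minimal left T-approximation, and set ρ(Q) = Im f; for a morphism a: Q → Q', define ρ(a) as the induced morphism Im f → Im f'. Then ρ: P → P_T is a well-defined additive functor which kills the ideal I and induces an equivalence of categories ρ̄: P̄ = P/I → P_T. -/

import Mathlib

open CategoryTheory CategoryTheory.Limits ZeroObject

namespace TauTilting

universe w v u

/-- A class of "conflations" (kernel–cokernel pairs) on an additive category,
the datum underlying an exact structure in the sense of Quillen. -/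
structure ConflationStruct (C : Type u) [Category.{v} C] [Preadditive C] where
  /-- `IsConflation f g` means that `X ↣ Y ↠ Z` given by `f, g` is a conflation. -/
  IsConflation : ∀ ⦃X Y Z : C⦄, (X ⟶ Y) → (Y ⟶ Z) → Prop

namespace ConflationStruct

variable {C : Type u} [Category.{v} C] [Preadditive C] (S : ConflationStruct C)

/-- A morphism is an inflation if it occurs as the first map of a conflation. -/
def IsInflation {X Y : C} (f : X ⟶ Y) : Prop :=
  ∃ (Z : C) (g : Y ⟶ Z), S.IsConflation f g

/-- A morphism is a deflation if it occurs as the second map of a conflation. -/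
def IsDeflation {Y Z : C} (g : Y ⟶ Z) : Prop :=
  ∃ (X : C) (f : X ⟶ Y), S.IsConflation f g

/-- Quillen's axioms for an exact structure: conflations are kernel-cokernel pairs,
the class of conflations is closed under isomorphisms, identities are inflations and
deflations, inflations and deflations are closed under composition, pushouts of
inflations along arbitrary morphisms exist and are inflations, and dually. -/
structure IsExactStructure : Prop where
  ker_coker : ∀ {X Y Z : C} {f : X ⟶ Y} {g : Y ⟶ Z}, S.IsConflation f g →
    ∃ w : f ≫ g = 0, Nonempty (IsLimit (KernelFork.ofι f w)) ∧
      Nonempty (IsColimit (CokernelCofork.ofπ g w))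
  iso_closed : ∀ {X X' Y Y' Z Z' : C} (eX : X' ≅ X) (eY : Y' ≅ Y) (eZ : Z' ≅ Z)
    {f : X ⟶ Y} {g : Y ⟶ Z}, S.IsConflation f g →
    S.IsConflation (eX.hom ≫ f ≫ eY.inv) (eY.hom ≫ g ≫ eZ.inv)
  id_inflation : ∀ X : C, S.IsInflation (𝟙 X)
  id_deflation : ∀ X : C, S.IsDeflation (𝟙 X)
  inflation_comp : ∀ {X Y Z : C} {f : X ⟶ Y} {g : Y ⟶ Z},
    S.IsInflation f → S.IsInflation g → S.IsInflation (f ≫ g)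
  deflation_comp : ∀ {X Y Z : C} {f : X ⟶ Y} {g : Y ⟶ Z},
    S.IsDeflation f → S.IsDeflation g → S.IsDeflation (f ≫ g)
  pushout_inflation : ∀ {X Y Z : C} (f : X ⟶ Y) (h : X ⟶ Z), S.IsInflation f →
    ∃ (W : C) (h' : Y ⟶ W) (f' : Z ⟶ W), IsPushout f h h' f' ∧ S.IsInflation f'
  pullback_deflation : ∀ {X Y Z : C} (g : X ⟶ Z) (h : Y ⟶ Z), S.IsDeflation g →
    ∃ (W : C) (h' : W ⟶ X) (g' : W ⟶ Y), IsPullback h' g' g h ∧ S.IsDeflation g'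

/-- An object `P` is projective relative to the exact structure: `Hom(P,-)` sends
conflations to short exact sequences, equivalently morphisms out of `P` lift along
deflations. -/
def IsProjObj (P : C) : Prop :=
  ∀ ⦃Y Z : C⦄ (g : Y ⟶ Z), S.IsDeflation g → ∀ u : P ⟶ Z, ∃ v : P ⟶ Y, v ≫ g = u

/-- The class of projective objects. -/
def projClass : Set C := {P | S.IsProjObj P}

/-- The exact category has enough projectives. -/
def HasEnoughProjectives : Prop :=
  ∀ X : C, ∃ (P : C) (p : P ⟶ X), S.IsProjObj P ∧ S.IsDeflation p

/-- `Fac T` : objects admitting a deflation from an object of `T`. -/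
def Fac (T : Set C) : Set C :=
  {X | ∃ (T' : C) (g : T' ⟶ X), T' ∈ T ∧ S.IsDeflation g}

/-- `Sub T` : objects admitting an inflation into an object of `T`. -/
def Sub (T : Set C) : Set C :=
  {X | ∃ (T' : C) (f : X ⟶ T'), T' ∈ T ∧ S.IsInflation f}

/-- `Ext¹(X, Y) = 0`, expressed by the splitting of all conflations `Y ↣ E ↠ X`. -/
def ext1Zero (X Y : C) : Prop :=
  ∀ (E : C) (f : Y ⟶ E) (g : E ⟶ X), S.IsConflation f g → ∃ s : X ⟶ E, s ≫ g = 𝟙 X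

/-- A morphism is admissible if it factors as a deflation followed by an inflation. -/
def IsAdmissible {X Y : C} (f : X ⟶ Y) : Prop :=
  ∃ (K : C) (d : X ⟶ K) (i : K ⟶ Y), S.IsDeflation d ∧ S.IsInflation i ∧ d ≫ i = f

end ConflationStruct

section Approx

variable {C : Type u} [Category.{v} C]

/-- `f : P ⟶ X` is a left `T`-approximation. -/
def LeftApprox (T : Set C) {P X : C} (f : P ⟶ X) : Prop :=
  X ∈ T ∧ ∀ (T' : C), T' ∈ T → ∀ u : P ⟶ T', ∃ v : X ⟶ T', f ≫ v = u

/-- `f : X ⟶ M` is a right `T`-approximation. -/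
def RightApprox (T : Set C) {X M : C} (f : X ⟶ M) : Prop :=
  X ∈ T ∧ ∀ (T' : C), T' ∈ T → ∀ u : T' ⟶ M, ∃ v : T' ⟶ X, v ≫ f = u

/-- A class of objects closed under direct summands. -/
def SummandClosed (T : Set C) : Prop :=
  ∀ {X Z : C}, Z ∈ T → ∀ (i : X ⟶ Z) (r : Z ⟶ X), i ≫ r = 𝟙 X → X ∈ T

end Approx

section Additive

variable {C : Type u} [Category.{v} C] [Preadditive C] [HasZeroObject C] [HasBinaryBiproducts C]

/-- An additively closed subcategory: closed under isomorphisms, finite direct sums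
and direct summands. -/
structure AdditivelyClosed (T : Set C) : Prop where
  mem_of_iso : ∀ {X Y : C}, (X ≅ Y) → X ∈ T → Y ∈ T
  zero_mem : (0 : C) ∈ T
  biprod_mem : ∀ {X Y : C}, X ∈ T → Y ∈ T → (X ⊞ Y) ∈ T
  summand_mem : SummandClosed T

/-- An object is indecomposable if it is nonzero and any biproduct decomposition is
trivial. -/
def IsIndecomposable (X : C) : Prop :=
  ¬ IsZero X ∧ ∀ (A B : C), (X ≅ A ⊞ B) → IsZero A ∨ IsZero B

/-- The cardinality of the set of isomorphism classes of indecomposable objects in `T`. -/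
noncomputable def numIndec (T : Set C) : Cardinal :=
  Cardinal.mk
    (Quot fun (X Y : {X : C // X ∈ T ∧ IsIndecomposable X}) => Nonempty ((X : C) ≅ (Y : C)))

end Additive

section AddOf

variable {C : Type u} [Category.{v} C] [Preadditive C] [HasFiniteBiproducts C]

/-- The additive closure of a class of objects : direct summands of finite direct
sums of its objects. -/
def addOf (X : Set C) : Set C :=
  {Y | ∃ (n : ℕ) (f : Fin n → C), (∀ j, f j ∈ X) ∧
    ∃ (i : Y ⟶ ⨁ f) (r : (⨁ f) ⟶ Y), i ≫ r = 𝟙 Y}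

/-- A Krull-Schmidt category: every object is a finite direct sum of objects with
local endomorphism ring. -/
def IsKrullSchmidt (C : Type u) [Category.{v} C] [Preadditive C] [HasFiniteBiproducts C] : Prop :=
  ∀ X : C, ∃ (n : ℕ) (f : Fin n → C), (∀ j, IsLocalRing (End (f j))) ∧ Nonempty (X ≅ ⨁ f)

end AddOf

namespace ConflationStruct

variable {C : Type u} [Category.{v} C] [Preadditive C] (S : ConflationStruct C)

section TauTilt

/-- The existence of an exact sequence `P → T⁰ ↠ T¹` with `T⁰, T¹ ∈ T` whose first
map is a left `T`-approximation; the exact sequence is encoded by the factorization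
of the first map as a deflation onto its image followed by an inflation which is a
kernel of the deflation `T⁰ ↠ T¹`. -/
def ApproxSeq (T : Set C) (P : C) : Prop :=
  ∃ (K T0 T1 : C) (d : P ⟶ K) (i : K ⟶ T0) (g : T0 ⟶ T1),
    T1 ∈ T ∧ S.IsDeflation d ∧ S.IsConflation i g ∧ LeftApprox T (d ≫ i)

variable [HasZeroObject C] [HasBinaryBiproducts C]

/-- A τ-rigid subcategory: additively closed with `Ext¹(T, Fac T) = 0`. -/
def IsTauRigid (T : Set C) : Prop :=
  AdditivelyClosed T ∧ ∀ T' ∈ T, ∀ X ∈ S.Fac T, S.ext1Zero T' X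

/-- A support τ-tilting subcategory. -/
def IsSupportTauTilting (T : Set C) : Prop :=
  S.IsTauRigid T ∧ ∀ P ∈ S.projClass, S.ApproxSeq T P

/-- Condition (A): every projective admits an admissible left `T`-approximation. -/
def CondA (T : Set C) : Prop :=
  ∀ P ∈ S.projClass, ∃ (T' : C) (f : P ⟶ T'), LeftApprox T f ∧ S.IsAdmissible f

end TauTilt

section Relative

/-- `g` is a deflation of the full exact subcategory supported on `D` (i.e. it is part
of a conflation all of whose terms belong to `D`; the source and target are recorded
separately where needed). -/
def DeflationIn (D : Set C) {Y Z : C} (g : Y ⟶ Z) : Prop :=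
  ∃ (X : C) (f : X ⟶ Y), X ∈ D ∧ S.IsConflation f g

/-- `P` is a projective object of the full exact subcategory supported on `D`. -/
def IsProjRel (D : Set C) (P : C) : Prop :=
  P ∈ D ∧ ∀ ⦃Y Z : C⦄ (g : Y ⟶ Z), Y ∈ D → Z ∈ D → S.DeflationIn D g →
    ∀ u : P ⟶ Z, ∃ v : P ⟶ Y, v ≫ g = u

/-- `Ext¹(X,Y) = 0` computed in the full exact subcategory supported on `D`. -/
def ext1ZeroRel (D : Set C) (X Y : C) : Prop :=
  ∀ (E : C) (f : Y ⟶ E) (g : E ⟶ X), E ∈ D → S.IsConflation f g →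
    ∃ s : X ⟶ E, s ≫ g = 𝟙 X

/-- `extSuccZeroRel S D n X Y` says `Ext^{n+1}(X, Y) = 0` in the full exact subcategory
supported on `D`, via dimension shifting along syzygies. -/
def extSuccZeroRel (D : Set C) : ℕ → C → C → Prop
  | 0 => fun X Y => S.ext1ZeroRel D X Y
  | (n+1) => fun X Y => ∀ (K P : C) (i : K ⟶ P) (p : P ⟶ X),
      K ∈ D → S.IsProjRel D P → S.IsConflation i p → extSuccZeroRel D n K Y

/-- `Ext^{n+1}(X,Y) = 0` in the ambient exact category. -/
def extSuccZero (n : ℕ) (X Y : C) : Prop := S.extSuccZeroRel Set.univ n X Y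

end Relative

section Tilting

variable [HasZeroObject C] [HasBinaryBiproducts C]

/-- A (1-)tilting subcategory of the ambient exact category (with enough projectives):
additively closed, self-orthogonal for all `Ext^i`, `i ≥ 1`, of projective dimension at
most one, and every projective admits a conflation `P ↣ T⁰ ↠ T¹` with `T⁰, T¹ ∈ T`. -/
def IsTilting (T : Set C) : Prop :=
  AdditivelyClosed T ∧
  (∀ T1 ∈ T, ∀ T2 ∈ T, ∀ n : ℕ, S.extSuccZero n T1 T2) ∧
  (∀ T' ∈ T, ∀ Y : C, S.extSuccZero 1 T' Y) ∧
  (∀ P ∈ S.projClass, ∃ (T0 T1 : C) (f : P ⟶ T0) (g : T0 ⟶ T1),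
    T0 ∈ T ∧ T1 ∈ T ∧ S.IsConflation f g)

/-- A tilting subcategory of the full exact subcategory supported on `D` (whose
projectives are the relative projectives). -/
def IsTiltingRel (D T : Set C) : Prop :=
  AdditivelyClosed T ∧ T ⊆ D ∧
  (∀ T1 ∈ T, ∀ T2 ∈ T, ∀ n : ℕ, S.extSuccZeroRel D n T1 T2) ∧
  (∀ T' ∈ T, ∀ Y ∈ D, S.extSuccZeroRel D 1 T' Y) ∧
  (∀ P : C, S.IsProjRel D P → ∃ (T0 T1 : C) (f : P ⟶ T0) (g : T0 ⟶ T1),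
    T0 ∈ T ∧ T1 ∈ T ∧ S.IsConflation f g)

end Tilting

section Pairs

/-- `⊥₁ D`. -/
def perp1 (D : Set C) : Set C := {X | ∀ Y ∈ D, S.ext1Zero X Y}

/-- `T^⊥₀`. -/
def perp0 (T : Set C) : Set C := {Y | ∀ T' ∈ T, ∀ f : T' ⟶ Y, f = 0}

/-- A torsion class: closed under factor objects and extensions. -/
def IsTorsionClass (D : Set C) : Prop :=
  (∀ {X Y : C} (g : X ⟶ Y), X ∈ D → S.IsDeflation g → Y ∈ D) ∧
  (∀ {X Y Z : C} {f : X ⟶ Y} {g : Y ⟶ Z}, S.IsConflation f g → X ∈ D → Z ∈ D → Y ∈ D)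

/-- A torsion pair `(D, F)`. -/
def IsTorsionPair (D F : Set C) : Prop :=
  (∀ X ∈ D, ∀ Y ∈ F, ∀ f : X ⟶ Y, f = 0) ∧
  (∀ X : C, ∃ (D0 F0 : C) (i : D0 ⟶ X) (p : X ⟶ F0), D0 ∈ D ∧ F0 ∈ F ∧ S.IsConflation i p)

/-- A τ-cotorsion pair `(Cc, D)`. -/
def IsTauCotorsionPair (Cc D : Set C) : Prop :=
  Cc = S.perp1 D ∧
  ∀ P ∈ S.projClass, ∃ (K D0 C0 : C) (d : P ⟶ K) (i : K ⟶ D0) (g : D0 ⟶ C0),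
    D0 ∈ Cc ∧ D0 ∈ D ∧ C0 ∈ Cc ∧ S.IsDeflation d ∧ S.IsConflation i g ∧
    LeftApprox D (d ≫ i)

/-- A (complete) cotorsion pair `(Cc, D)`. -/
def IsCotorsionPair (Cc D : Set C) : Prop :=
  SummandClosed Cc ∧ SummandClosed D ∧
  (∀ X ∈ Cc, ∀ Y ∈ D, S.ext1Zero X Y) ∧
  (∀ X : C, ∃ (D0 C0 : C) (f : D0 ⟶ C0) (g : C0 ⟶ X),
    D0 ∈ D ∧ C0 ∈ Cc ∧ S.IsConflation f g) ∧
  (∀ X : C, ∃ (D1 C1 : C) (f : X ⟶ D1) (g : D1 ⟶ C1),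
    D1 ∈ D ∧ C1 ∈ Cc ∧ S.IsConflation f g)

/-- Admissibly contravariantly finite subcategory. -/
def IsACF (T : Set C) : Prop :=
  ∀ X : C, ∃ (T' : C) (f : T' ⟶ X), RightApprox T f ∧ S.IsAdmissible f

end Pairs

end ConflationStruct

/-- A weakly idempotent complete additive category: every section has a cokernel. -/
def WeaklyIdempotentComplete (C : Type u) [Category.{v} C] [Preadditive C] : Prop :=
  ∀ {X Y : C} (s : X ⟶ Y), (∃ r : Y ⟶ X, s ≫ r = 𝟙 X) → HasCokernel s


namespace ConflationStruct

variable {C : Type u} [Category.{v} C] [Preadditive C] (S : ConflationStruct C)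

section ET

/-- Membership in the ideal `I` of the category of projectives: morphisms `f`
between projectives with `Hom(f, T') = 0` for all `T' ∈ T`. -/
def memIdeal (T : Set C) {Q Q' : C} (f : Q ⟶ Q') : Prop :=
  S.IsProjObj Q ∧ S.IsProjObj Q' ∧ ∀ T' ∈ T, ∀ g : Q' ⟶ T', f ≫ g = 0

/-- `A_T`: the objects killed by the ideal `I`. -/
def AT (T : Set C) : Set C :=
  {X | ∀ ⦃Q Q' : C⦄ (f : Q ⟶ Q'), S.memIdeal T f → ∀ h : Q' ⟶ X, f ≫ h = 0}

/-- The conflation structure induced on a full subcategory: conflations of the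
ambient category all of whose terms lie in the subcategory. -/
def structOn (D : Set C) : ConflationStruct (ObjectProperty.FullSubcategory (fun X : C => X ∈ D)) :=
  ⟨fun _ _ _ f g => S.IsConflation f.hom g.hom⟩

variable [HasFiniteBiproducts C]

/-- `P_T`: additive closure of the images of admissible left `T`-approximations of
projectives. -/
def PTset (T : Set C) : Set C :=
  addOf {K | ∃ (Q T0 : C) (d : Q ⟶ K) (i : K ⟶ T0),
    S.IsProjObj Q ∧ S.IsDeflation d ∧ S.IsInflation i ∧ LeftApprox T (d ≫ i)}

end ET

section NTilting

/-- `T^⊥ = {Y | Ext^i(T', Y) = 0  for all i ≥ 1, T' ∈ T}`. -/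
def rperp (T : Set C) : Set C :=
  {Y | ∀ T' ∈ T, ∀ n : ℕ, S.extSuccZero n T' Y}

/-- `Cores S D n X` : `X` admits an exact sequence
`X ↣ Y₀ → ⋯ → Y_{n-1} ↠ Y_n` with all `Yᵢ ∈ D`. -/
def Cores (D : Set C) : ℕ → C → Prop
  | 0 => fun X => X ∈ D
  | (n+1) => fun X => ∃ (Y K : C) (i : X ⟶ Y) (p : Y ⟶ K),
      Y ∈ D ∧ S.IsConflation i p ∧ Cores D n K

/-- An `n`-tilting subcategory in the sense of Sauter: `T^⊥` has enough projectives
given by `T`, and every object has a `T^⊥`-coresolution of length `n`. -/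
def IsNTilting (T : Set C) (n : ℕ) : Prop :=
  T ⊆ S.rperp T ∧
  (∀ T' ∈ T, ∀ Y ∈ S.rperp T, S.ext1Zero T' Y) ∧
  (∀ Y ∈ S.rperp T, ∃ (K T' : C) (i : K ⟶ T') (p : T' ⟶ Y),
    T' ∈ T ∧ K ∈ S.rperp T ∧ S.IsConflation i p) ∧
  (∀ X : C, S.Cores (S.rperp T) n X)

/-- `P^{<∞}`: objects of finite projective dimension. -/
def Pfin : Set C := {X | ∃ n : ℕ, ∀ Y : C, S.extSuccZero n X Y}

end NTilting

section TauObj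

variable [HasZeroObject C] [HasBinaryBiproducts C]

/-- Variant of `ApproxSeq` where the left approximation is required to be nonzero. -/
def ApproxSeqNonzero (T : Set C) (P : C) : Prop :=
  ∃ (K T0 T1 : C) (d : P ⟶ K) (i : K ⟶ T0) (g : T0 ⟶ T1),
    T1 ∈ T ∧ S.IsDeflation d ∧ S.IsConflation i g ∧ LeftApprox T (d ≫ i) ∧ d ≫ i ≠ 0

/-- A τ-tilting subcategory: support τ-tilting such that every nonzero projective
admits a nonzero such approximation sequence. -/
def IsTauTiltingSubcat (T : Set C) : Prop :=
  S.IsSupportTauTilting T ∧ ∀ P ∈ S.projClass, ¬ IsZero P → S.ApproxSeqNonzero T P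

end TauObj

end ConflationStruct

section K0

variable {C : Type u} [Category.{v} C] [Preadditive C]

/-- Relations for the Grothendieck group of an exact subcategory: conflation
relations together with isomorphism relations. -/
def K0ExRels (S : ConflationStruct C) (D : Set C) :
    Set (FreeAbelianGroup {X : C // X ∈ D}) :=
  {x | (∃ (A B E : {X : C // X ∈ D}) (f : (A : C) ⟶ (B : C)) (g : (B : C) ⟶ (E : C)),
          S.IsConflation f g ∧
          x = FreeAbelianGroup.of B - FreeAbelianGroup.of A - FreeAbelianGroup.of E) ∨
       (∃ (A B : {X : C // X ∈ D}), Nonempty ((A : C) ≅ (B : C)) ∧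
          x = FreeAbelianGroup.of A - FreeAbelianGroup.of B)}

/-- The Grothendieck group of the full exact subcategory supported on `D`. -/
def K0Ex (S : ConflationStruct C) (D : Set C) :=
  FreeAbelianGroup {X : C // X ∈ D} ⧸ AddSubgroup.closure (K0ExRels S D)

noncomputable instance (S : ConflationStruct C) (D : Set C) : AddCommGroup (K0Ex S D) :=
  QuotientAddGroup.Quotient.addCommGroup _

variable [HasBinaryBiproducts C]

/-- Relations for the split Grothendieck group of an additive subcategory. -/
def K0SplitRels (T : Set C) : Set (FreeAbelianGroup {X : C // X ∈ T}) :=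
  {x | (∃ (A B E : {X : C // X ∈ T}), Nonempty ((E : C) ≅ (A : C) ⊞ (B : C)) ∧
          x = FreeAbelianGroup.of E - FreeAbelianGroup.of A - FreeAbelianGroup.of B) ∨
       (∃ (A B : {X : C // X ∈ T}), Nonempty ((A : C) ≅ (B : C)) ∧
          x = FreeAbelianGroup.of A - FreeAbelianGroup.of B)}

/-- The split Grothendieck group of the additive subcategory supported on `T`. -/
def K0Split (T : Set C) :=
  FreeAbelianGroup {X : C // X ∈ T} ⧸ AddSubgroup.closure (K0SplitRels T)

noncomputable instance (T : Set C) : AddCommGroup (K0Split T) :=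
  QuotientAddGroup.Quotient.addCommGroup _

end K0

end TauTilting

namespace TauTilting

/-! ### Auxiliary machinery for Statement 12 -/

namespace RhoAux

universe v₂ u₂ v₃ u₃

section Generic

variable {A : Type u₂} [Category.{v₂} A] [Preadditive A] [HasFiniteBiproducts A]

attribute [local instance] hasBinaryBiproducts_of_finite_biproducts

omit [HasFiniteBiproducts A] in
lemma unit_shift {Z V : A} (a : Z ⟶ V) (b : V ⟶ Z) (y : Z ⟶ Z)
    (h1 : (𝟙 Z - a ≫ b) ≫ y = 𝟙 Z) (h2 : y ≫ (𝟙 Z - a ≫ b) = 𝟙 Z) :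
    (𝟙 V - b ≫ a) ≫ (𝟙 V + b ≫ y ≫ a) = 𝟙 V ∧
      (𝟙 V + b ≫ y ≫ a) ≫ (𝟙 V - b ≫ a) = 𝟙 V := by
  have e1 : y - (a ≫ b) ≫ y = 𝟙 Z := by
    rw [← h1, Preadditive.sub_comp, Category.id_comp]
  have e2 : y - y ≫ (a ≫ b) = 𝟙 Z := by
    rw [← h2, Preadditive.comp_sub, Category.comp_id]
  have key1 : b ≫ y ≫ a - b ≫ ((a ≫ b) ≫ y) ≫ a = b ≫ a := by
    rw [← Preadditive.comp_sub, ← Preadditive.sub_comp, e1, Category.id_comp]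
  have key2 : b ≫ y ≫ a - b ≫ (y ≫ (a ≫ b)) ≫ a = b ≫ a := by
    rw [← Preadditive.comp_sub, ← Preadditive.sub_comp, e2, Category.id_comp]
  constructor
  · have expand : (𝟙 V - b ≫ a) ≫ (𝟙 V + b ≫ y ≫ a)
        = 𝟙 V + (b ≫ y ≫ a - b ≫ ((a ≫ b) ≫ y) ≫ a) - b ≫ a := by
      simp only [Preadditive.sub_comp, Preadditive.comp_add, Category.id_comp,
        Category.comp_id, Category.assoc]
      abel
    rw [expand, key1]
    abel
  · have expand : (𝟙 V + b ≫ y ≫ a) ≫ (𝟙 V - b ≫ a)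
        = 𝟙 V + (b ≫ y ≫ a - b ≫ (y ≫ (a ≫ b)) ≫ a) - b ≫ a := by
      simp only [Preadditive.add_comp, Preadditive.comp_sub, Category.id_comp,
        Category.comp_id, Category.assoc]
      abel
    rw [expand, key2]
    abel

section FinSucc

variable {m : ℕ} (Z : Fin (m + 1) → A)

lemma ι_zero_lift :
    biproduct.ι Z 0 ≫ biproduct.lift (fun l : Fin m => biproduct.π Z l.succ) = 0 := by
  apply biproduct.hom_ext
  intro l
  simp [biproduct.ι_π_ne _ (fun h => (Fin.succ_ne_zero l) h.symm)]

lemma ι_succ_lift (l0 : Fin m) :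
    biproduct.ι Z l0.succ ≫ biproduct.lift (fun l : Fin m => biproduct.π Z l.succ)
      = biproduct.ι (fun l : Fin m => Z l.succ) l0 := by
  apply biproduct.hom_ext
  intro l
  by_cases h : l0 = l
  · subst h; simp
  · simp [biproduct.ι_π_ne _ (fun hc => h (Fin.succ_injective _ hc)),
      biproduct.ι_π_ne _ h]

/-- Peeling off the first summand of a `Fin (m+1)`-indexed biproduct. -/
noncomputable def finSuccIso :
    (⨁ Z) ≅ (Z 0) ⊞ (⨁ fun j : Fin m => Z j.succ) where
  hom := biprod.lift (biproduct.π Z 0) (biproduct.lift fun j => biproduct.π Z j.succ)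
  inv := biprod.desc (biproduct.ι Z 0) (biproduct.desc fun j => biproduct.ι Z j.succ)
  hom_inv_id := by
    rw [biprod.lift_desc]
    apply biproduct.hom_ext'
    intro j
    rw [Category.comp_id, Preadditive.comp_add]
    induction j using Fin.cases with
    | zero =>
        rw [← Category.assoc, ← Category.assoc, biproduct.ι_π_self, Category.id_comp,
          ι_zero_lift, Limits.zero_comp, add_zero]
    | succ l0 =>
        rw [← Category.assoc, ← Category.assoc,
          biproduct.ι_π_ne _ (Fin.succ_ne_zero l0), Limits.zero_comp, zero_add,
          ι_succ_lift, biproduct.ι_desc]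
  inv_hom_id := by
    apply biprod.hom_ext'
    · rw [← Category.assoc, biprod.inl_desc, Category.comp_id]
      apply biprod.hom_ext
      · rw [Category.assoc, biprod.lift_fst, biproduct.ι_π_self, biprod.inl_fst]
      · rw [Category.assoc, biprod.lift_snd, ι_zero_lift, biprod.inl_snd]
    · rw [← Category.assoc, biprod.inr_desc, Category.comp_id]
      apply biproduct.hom_ext'
      intro l
      rw [← Category.assoc, biproduct.ι_desc]
      apply biprod.hom_ext
      · rw [Category.assoc, biprod.lift_fst, biproduct.ι_π_ne _ (Fin.succ_ne_zero l),
          Category.assoc, biprod.inr_fst, Limits.comp_zero]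
      · rw [Category.assoc, biprod.lift_snd, ι_succ_lift, Category.assoc, biprod.inr_snd,
          Category.comp_id]

end FinSucc

/-- Azumaya-style exchange: a retract of a finite biproduct of objects with local (or
trivial) endomorphism rings is isomorphic to a sub-biproduct, provided idempotents split. -/
theorem azumaya_retract [idem : IsIdempotentComplete A] :
    ∀ (m : ℕ) (Z : Fin m → A),
      (∀ i, IsLocalRing (End (Z i)) ∨ (𝟙 (Z i) = (0 : Z i ⟶ Z i))) →
      ∀ (V : A) (s : V ⟶ ⨁ Z) (r : (⨁ Z) ⟶ V), s ≫ r = 𝟙 V →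
      ∃ (k : ℕ) (g : Fin k → Fin m), Nonempty (V ≅ ⨁ fun l => Z (g l)) := by
  intro m
  induction m with
  | zero =>
      intro Z _ V s r hsr
      refine ⟨0, Fin.elim0, ⟨⟨0, 0, ?_, ?_⟩⟩⟩
      · have hz : (𝟙 (⨁ Z) : ⨁ Z ⟶ ⨁ Z) = 0 := by
          apply biproduct.hom_ext
          intro j
          exact j.elim0
        have h1V : (𝟙 V : V ⟶ V) = 0 := by
          calc (𝟙 V : V ⟶ V) = s ≫ r := hsr.symm
            _ = s ≫ 𝟙 (⨁ Z) ≫ r := by rw [Category.id_comp]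
            _ = 0 := by rw [hz]; simp
        rw [h1V]; simp
      · apply biproduct.hom_ext
        intro j
        exact j.elim0
  | succ m ih =>
      intro Z hl V s r hsr
      set R := (⨁ fun j : Fin m => Z j.succ) with hR
      let eX := finSuccIso Z
      set s' : V ⟶ (Z 0) ⊞ R := s ≫ eX.hom with hs'
      set r' : (Z 0) ⊞ R ⟶ V := eX.inv ≫ r with hr'
      have hsr' : s' ≫ r' = 𝟙 V := by
        rw [hs', hr']
        simp only [Category.assoc, Iso.hom_inv_id_assoc]
        exact hsr
      set u : Z 0 ⟶ Z 0 := biprod.inl ≫ (r' ≫ s') ≫ biprod.fst with hu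
      rcases hl 0 with hloc | hzero
      · haveI := hloc
        have hcases := IsLocalRing.isUnit_or_isUnit_of_add_one (R := End (Z 0))
          (a := End.of u) (b := End.of (𝟙 (Z 0) - u))
          (by show u + (𝟙 (Z 0) - u) = 𝟙 (Z 0); abel)
        rcases hcases with hunit | hunit
        · -- Case A : u invertible
          obtain ⟨υ, hυ⟩ := hunit
          set y : Z 0 ⟶ Z 0 := (υ⁻¹ : (End (Z 0))ˣ).val with hy
          have hy1 : u ≫ y = 𝟙 (Z 0) := by
            have h' := υ.inv_mul
            rw [hυ] at h'
            exact h'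
          set α : Z 0 ⟶ V := biprod.inl ≫ r' with hα
          set β : V ⟶ Z 0 := s' ≫ biprod.fst ≫ y with hβ
          have hαβ : α ≫ β = 𝟙 (Z 0) := by
            rw [hα, hβ, ← hy1, hu]
            simp only [Category.assoc]
          set p : V ⟶ V := β ≫ α with hp
          have hpp : (𝟙 V - p) ≫ (𝟙 V - p) = 𝟙 V - p := by
            have hp2 : p ≫ p = p := by
              rw [hp, Category.assoc, ← Category.assoc α β α, hαβ, Category.id_comp]
            simp only [Preadditive.sub_comp, Preadditive.comp_sub, Category.id_comp,
              Category.comp_id, hp2]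
            abel
          obtain ⟨V₁, s₁, r₁, h₁, h₂⟩ := idem.idempotents_split V (𝟙 V - p) hpp
          have hs₁p : s₁ ≫ p = 0 := by
            have h3 : s₁ ≫ (𝟙 V - p) = s₁ := by
              rw [← h₂, ← Category.assoc, h₁, Category.id_comp]
            rw [Preadditive.comp_sub, Category.comp_id] at h3
            calc s₁ ≫ p = s₁ - (s₁ - s₁ ≫ p) := by abel
              _ = 0 := by rw [h3]; abel
          have hαr₁ : α ≫ r₁ = 0 := by
            have hα1p : α ≫ (𝟙 V - p) = 0 := by
              rw [Preadditive.comp_sub, Category.comp_id, hp, ← Category.assoc, hαβ,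
                Category.id_comp]
              abel
            calc α ≫ r₁ = α ≫ r₁ ≫ (s₁ ≫ r₁) := by rw [h₁, Category.comp_id]
              _ = (α ≫ (r₁ ≫ s₁)) ≫ r₁ := by simp only [Category.assoc]
              _ = 0 := by rw [h₂, hα1p, Limits.zero_comp]
          have hs₁β : s₁ ≫ β = 0 := by
            calc s₁ ≫ β = s₁ ≫ (β ≫ α) ≫ β := by
                  rw [Category.assoc, hαβ, Category.comp_id]
              _ = (s₁ ≫ p) ≫ β := by rw [hp]; simp only [Category.assoc]
              _ = 0 := by rw [hs₁p, Limits.zero_comp]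
          have hVsplit : V ≅ (Z 0) ⊞ V₁ := by
            refine ⟨biprod.lift β r₁, biprod.desc α s₁, ?_, ?_⟩
            · rw [biprod.lift_desc, ← hp, h₂]
              abel
            · apply biprod.hom_ext'
              · rw [← Category.assoc, biprod.inl_desc, Category.comp_id]
                apply biprod.hom_ext
                · rw [Category.assoc, biprod.lift_fst, hαβ, biprod.inl_fst]
                · rw [Category.assoc, biprod.lift_snd, hαr₁, biprod.inl_snd]
              · rw [← Category.assoc, biprod.inr_desc, Category.comp_id]
                apply biprod.hom_ext
                · rw [Category.assoc, biprod.lift_fst, hs₁β, biprod.inr_fst]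
                · rw [Category.assoc, biprod.lift_snd, h₁, biprod.inr_snd]
          have htot : (biprod.snd : (Z 0) ⊞ R ⟶ R) ≫ biprod.inr
              = 𝟙 _ - biprod.fst ≫ biprod.inl := by
            rw [← biprod.total]; abel
          have hret : (s₁ ≫ s' ≫ biprod.snd) ≫ (biprod.inr ≫ r' ≫ r₁) = 𝟙 V₁ := by
            calc (s₁ ≫ s' ≫ biprod.snd) ≫ (biprod.inr ≫ r' ≫ r₁)
                = s₁ ≫ s' ≫ (biprod.snd ≫ biprod.inr) ≫ r' ≫ r₁ := by
                  simp only [Category.assoc]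
              _ = s₁ ≫ s' ≫ (𝟙 _ - biprod.fst ≫ biprod.inl) ≫ r' ≫ r₁ := by rw [htot]
              _ = s₁ ≫ ((s' ≫ r') ≫ r₁)
                    - s₁ ≫ (s' ≫ biprod.fst) ≫ ((biprod.inl ≫ r') ≫ r₁) := by
                  simp only [Preadditive.sub_comp, Preadditive.comp_sub, Category.id_comp,
                    Category.assoc]
              _ = 𝟙 V₁ := by
                  rw [hsr', ← hα, hαr₁]
                  simp only [Limits.comp_zero, Category.id_comp, h₁, sub_zero]
          obtain ⟨k, g₁, ⟨iso₁⟩⟩ := ih (fun j => Z j.succ) (fun j => hl j.succ) V₁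
            (s₁ ≫ s' ≫ biprod.snd) (biprod.inr ≫ r' ≫ r₁) hret
          refine ⟨k + 1, Fin.cons 0 (fun l => (g₁ l).succ), ?_⟩
          have hfam : (fun l : Fin k =>
                Z ((Fin.cons 0 (fun l' => (g₁ l').succ) : Fin (k+1) → Fin (m+1)) l.succ))
              = fun l : Fin k => Z (g₁ l).succ := by
            funext l
            simp
          have hz0 : Z ((Fin.cons 0 (fun l' => (g₁ l').succ) : Fin (k+1) → Fin (m+1)) 0)
              = Z 0 := by simp
          exact ⟨hVsplit
            ≪≫ biprod.mapIso (eqToIso hz0.symm)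
                (iso₁ ≪≫ eqToIso (congrArg (fun F : Fin k → A => ⨁ F) hfam.symm))
            ≪≫ (finSuccIso (fun l =>
                  Z ((Fin.cons 0 (fun l' => (g₁ l').succ) : Fin (k+1) → Fin (m+1)) l))).symm⟩
        · -- Case B : 1 - u invertible
          obtain ⟨υ, hυ⟩ := hunit
          set y : Z 0 ⟶ Z 0 := (υ⁻¹ : (End (Z 0))ˣ).val with hy
          have hy1 : (𝟙 (Z 0) - u) ≫ y = 𝟙 (Z 0) := by
            have h' := υ.inv_mul
            rw [hυ] at h'
            exact h'
          have hy2 : y ≫ (𝟙 (Z 0) - u) = 𝟙 (Z 0) := by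
            have h' := υ.mul_inv
            rw [hυ] at h'
            exact h'
          set a : Z 0 ⟶ V := biprod.inl ≫ r' with ha
          set b : V ⟶ Z 0 := s' ≫ biprod.fst with hb
          have hab : a ≫ b = u := by rw [ha, hb, hu]; simp only [Category.assoc]
          have hinv := unit_shift a b y (by rw [hab]; exact hy1) (by rw [hab]; exact hy2)
          have htot : (biprod.snd : (Z 0) ⊞ R ⟶ R) ≫ biprod.inr
              = 𝟙 _ - biprod.fst ≫ biprod.inl := by
            rw [← biprod.total]; abel
          have hγ : (s' ≫ biprod.snd) ≫ (biprod.inr ≫ r') = 𝟙 V - b ≫ a := by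
            calc (s' ≫ biprod.snd) ≫ (biprod.inr ≫ r')
                = s' ≫ (biprod.snd ≫ biprod.inr) ≫ r' := by simp only [Category.assoc]
              _ = s' ≫ (𝟙 _ - biprod.fst ≫ biprod.inl) ≫ r' := by rw [htot]
              _ = (s' ≫ r') - (s' ≫ biprod.fst) ≫ (biprod.inl ≫ r') := by
                  simp only [Preadditive.sub_comp, Preadditive.comp_sub, Category.id_comp,
                    Category.assoc]
              _ = 𝟙 V - b ≫ a := by rw [hsr', hb, ha]
          have hret : (s' ≫ biprod.snd) ≫ (biprod.inr ≫ r' ≫ (𝟙 V + b ≫ y ≫ a)) = 𝟙 V := by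
            calc (s' ≫ biprod.snd) ≫ (biprod.inr ≫ r' ≫ (𝟙 V + b ≫ y ≫ a))
                = ((s' ≫ biprod.snd) ≫ (biprod.inr ≫ r')) ≫ (𝟙 V + b ≫ y ≫ a) := by
                  simp only [Category.assoc]
              _ = (𝟙 V - b ≫ a) ≫ (𝟙 V + b ≫ y ≫ a) := by rw [hγ]
              _ = 𝟙 V := hinv.1
          obtain ⟨k, g₁, ⟨iso₁⟩⟩ := ih (fun j => Z j.succ) (fun j => hl j.succ) V
            (s' ≫ biprod.snd) (biprod.inr ≫ r' ≫ (𝟙 V + b ≫ y ≫ a)) hret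
          exact ⟨k, fun l => (g₁ l).succ, ⟨iso₁⟩⟩
      · -- Z 0 is a zero object
        have htot : (biprod.snd : (Z 0) ⊞ R ⟶ R) ≫ biprod.inr
            = 𝟙 _ - biprod.fst ≫ biprod.inl := by
          rw [← biprod.total]; abel
        have hfi : (biprod.fst : (Z 0) ⊞ R ⟶ Z 0) ≫ biprod.inl
            = (0 : (Z 0) ⊞ R ⟶ (Z 0) ⊞ R) := by
          calc (biprod.fst : (Z 0) ⊞ R ⟶ Z 0) ≫ biprod.inl
              = biprod.fst ≫ 𝟙 (Z 0) ≫ biprod.inl := by rw [Category.id_comp]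
            _ = (0 : (Z 0) ⊞ R ⟶ (Z 0) ⊞ R) := by rw [hzero]; simp
        have hret : (s' ≫ biprod.snd) ≫ (biprod.inr ≫ r') = 𝟙 V := by
          calc (s' ≫ biprod.snd) ≫ (biprod.inr ≫ r')
              = s' ≫ (biprod.snd ≫ biprod.inr) ≫ r' := by simp only [Category.assoc]
            _ = s' ≫ (𝟙 _ - biprod.fst ≫ biprod.inl) ≫ r' := by rw [htot]
            _ = s' ≫ r' - s' ≫ biprod.fst ≫ biprod.inl ≫ r' := by
                simp only [Preadditive.sub_comp, Preadditive.comp_sub, Category.id_comp,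
                  Category.assoc]
            _ = 𝟙 V := by
                rw [hsr', ← Category.assoc biprod.fst biprod.inl r', hfi]
                simp
        obtain ⟨k, g₁, ⟨iso₁⟩⟩ := ih (fun j => Z j.succ) (fun j => hl j.succ) V
          (s' ≫ biprod.snd) (biprod.inr ≫ r') hret
        exact ⟨k, fun l => (g₁ l).succ, ⟨iso₁⟩⟩

end Generic

section Transfer

variable {A : Type u₂} [Category.{v₂} A] [Preadditive A]
variable {B : Type u₃} [Category.{v₃} B] [Preadditive B]

/-- Transfer of the "local or trivial endomorphism ring" property along a surjective,
additive, multiplicative correspondence of endomorphism rings. -/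
lemma locOrZero_transfer {X : A} {Y : B} (f : (X ⟶ X) → (Y ⟶ Y))
    (hid : f (𝟙 X) = 𝟙 Y) (hcomp : ∀ a b : X ⟶ X, f (a ≫ b) = f a ≫ f b)
    (hsub : ∀ a b : X ⟶ X, f (a - b) = f a - f b)
    (hsurj : Function.Surjective f)
    (h : IsLocalRing (End X) ∨ 𝟙 X = 0) :
    IsLocalRing (End Y) ∨ 𝟙 Y = 0 := by
  by_cases hY : (𝟙 Y : Y ⟶ Y) = 0
  · exact Or.inr hY
  rcases h with hloc | hzero
  · left
    haveI : Nontrivial (End Y) := ⟨⟨End.of (𝟙 Y), End.of 0, by simpa using hY⟩⟩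
    refine IsLocalRing.of_is_unit_or_is_unit_of_add_one ?_
    intro a b hab
    obtain ⟨x, hx⟩ := hsurj a
    have hb : (b : End Y) = End.of (f (𝟙 X - x)) := by
      have : (a : End Y) + b = 1 := hab
      have hfx : f (𝟙 X - x) = 𝟙 Y - f x := by rw [hsub, hid]
      show b = f (𝟙 X - x)
      rw [hfx, hx]
      have : b = (1 : End Y) - a := by rw [← this]; abel
      rw [this]
      rfl
    have hcase := IsLocalRing.isUnit_or_isUnit_of_add_one (R := End X)
      (a := End.of x) (b := End.of (𝟙 X - x))
      (by show x + (𝟙 X - x) = 𝟙 X; abel)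
    have funit : ∀ z : X ⟶ X, IsUnit (End.of z) → IsUnit (End.of (f z)) := by
      intro z hz
      obtain ⟨ζ, hζ⟩ := hz
      have hz1 : (ζ.inv : X ⟶ X) ≫ z = 𝟙 X := by
        have h' := ζ.mul_inv
        rw [hζ] at h'
        exact h'
      have hz2 : z ≫ (ζ.inv : X ⟶ X) = 𝟙 X := by
        have h' := ζ.inv_mul
        rw [hζ] at h'
        exact h'
      exact ⟨⟨End.of (f z), End.of (f ζ.inv),
        (show f ζ.inv ≫ f z = 𝟙 Y by rw [← hcomp, hz1, hid]),
        (show f z ≫ f ζ.inv = 𝟙 Y by rw [← hcomp, hz2, hid])⟩, rfl⟩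
    rcases hcase with h1 | h1
    · left
      have := funit x h1
      rwa [show End.of (f x) = a from hx] at this
    · right
      have := funit _ h1
      rwa [← hb] at this
  · exfalso
    apply hY
    have hf0 : f 0 = 0 := by
      have h' := hsub 0 0
      rw [show ((0 : X ⟶ X) - 0) = (0 : X ⟶ X) by abel] at h'
      rw [h']
      abel
    rw [← hid, hzero, hf0]

end Transfer

section FunctorBiproduct

variable {A : Type u₂} [Category.{v₂} A] [Preadditive A] [HasFiniteBiproducts A]
variable {B : Type u₃} [Category.{v₃} B] [Preadditive B] [HasFiniteBiproducts B]
variable (F : A ⥤ B) [F.Additive]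

/-- An additive functor preserves finite biproducts, as an explicit isomorphism. -/
noncomputable def functorBiproductIso {n : ℕ} (W : Fin n → A) :
    F.obj (⨁ W) ≅ ⨁ fun j => F.obj (W j) where
  hom := biproduct.lift fun j => F.map (biproduct.π W j)
  inv := biproduct.desc fun j => F.map (biproduct.ι W j)
  hom_inv_id := by
    rw [biproduct.lift_desc]
    simp only [← F.map_comp]
    rw [← F.map_sum, biproduct.total, F.map_id]
  inv_hom_id := by
    apply biproduct.hom_ext'
    intro j
    apply biproduct.hom_ext
    intro k
    simp only [Category.assoc, biproduct.lift_π, biproduct.ι_desc_assoc, Category.id_comp]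
    rw [← F.map_comp]
    by_cases h : j = k
    · subst h
      rw [biproduct.ι_π_self, biproduct.ι_π_self, F.map_id]
    · rw [biproduct.ι_π_ne _ h, biproduct.ι_π_ne _ h, F.map_zero]

end FunctorBiproduct

section ExactBasics

variable {C : Type u₂} [Category.{v₂} C] [Preadditive C] {S : ConflationStruct C}

lemma conf_zero (hS : S.IsExactStructure) {X Y Z : C} {f : X ⟶ Y} {g : Y ⟶ Z}
    (h : S.IsConflation f g) : f ≫ g = 0 := by
  obtain ⟨w, _, _⟩ := hS.ker_coker h
  exact w

lemma epi_of_conf (hS : S.IsExactStructure) {X Y Z : C} {f : X ⟶ Y} {g : Y ⟶ Z}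
    (h : S.IsConflation f g) : Epi g := by
  obtain ⟨w, _, ⟨hc⟩⟩ := hS.ker_coker h
  exact ⟨fun u v huv => Cofork.IsColimit.hom_ext hc (by simpa using huv)⟩

lemma mono_of_conf (hS : S.IsExactStructure) {X Y Z : C} {f : X ⟶ Y} {g : Y ⟶ Z}
    (h : S.IsConflation f g) : Mono f := by
  obtain ⟨w, ⟨hk⟩, _⟩ := hS.ker_coker h
  exact ⟨fun u v huv => Fork.IsLimit.hom_ext hk (by simpa using huv)⟩

lemma epi_of_deflation (hS : S.IsExactStructure) {Y Z : C} {g : Y ⟶ Z}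
    (h : S.IsDeflation g) : Epi g := by
  obtain ⟨X, f, hc⟩ := h
  exact epi_of_conf hS hc

lemma mono_of_inflation (hS : S.IsExactStructure) {X Y : C} {f : X ⟶ Y}
    (h : S.IsInflation f) : Mono f := by
  obtain ⟨Z, g, hc⟩ := h
  exact mono_of_conf hS hc

lemma conf_lift (hS : S.IsExactStructure) {X Y Z : C} {f : X ⟶ Y} {g : Y ⟶ Z}
    (h : S.IsConflation f g) {W : C} (t : W ⟶ Y) (ht : t ≫ g = 0) :
    ∃ l : W ⟶ X, l ≫ f = t := by
  obtain ⟨w, ⟨hk⟩, _⟩ := hS.ker_coker h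
  obtain ⟨l, hl⟩ := KernelFork.IsLimit.lift' hk t ht
  exact ⟨l, by simpa using hl⟩

lemma proj_of_retract {A' B' : C} (hB : S.IsProjObj B') (s : A' ⟶ B') (r : B' ⟶ A')
    (hsr : s ≫ r = 𝟙 A') : S.IsProjObj A' := by
  intro Y Z gg hg u
  obtain ⟨v, hv⟩ := hB gg hg (r ≫ u)
  exact ⟨s ≫ v, by rw [Category.assoc, hv, ← Category.assoc, hsr, Category.id_comp]⟩

lemma proj_biproduct [HasFiniteBiproducts C] {n : ℕ} (W : Fin n → C)
    (hW : ∀ j, S.IsProjObj (W j)) : S.IsProjObj (⨁ W) := by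
  intro Y Z gg hg u
  choose v hv using fun j => hW j gg hg (biproduct.ι W j ≫ u)
  refine ⟨biproduct.desc v, ?_⟩
  apply biproduct.hom_ext'
  intro j
  rw [biproduct.ι_desc_assoc, hv]

end ExactBasics

end RhoAux

end TauTilting
namespace TauTilting

/-- given, for each projective `Q`, a fixed exact sequence
`Q →f T⁰ ↠ T¹` with `f` a minimal left `T`-approximation, the assignment
`ρ(Q) = Im f` with induced maps is a well-defined additive functor `P → P_T`
killing the ideal `I` and inducing an equivalence `P/I ≃ P_T`. -/
theorem rho_welldefined_equivalence
    {C : Type u} [Category.{v} C] [Preadditive C] [HasZeroObject C] [HasBinaryBiproducts C]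
    [HasFiniteBiproducts C]
    (S : ConflationStruct C) (hS : S.IsExactStructure) (hP : S.HasEnoughProjectives)
    (hKS : IsKrullSchmidt C)
    (T : Set C) (hrig : S.IsTauRigid T) (hA : S.CondA T)
    (K T0 T1 : {Q : C // S.IsProjObj Q} → C)
    (d : ∀ Q : {Q : C // S.IsProjObj Q}, (Q : C) ⟶ K Q)
    (i : ∀ Q : {Q : C // S.IsProjObj Q}, K Q ⟶ T0 Q)
    (g : ∀ Q : {Q : C // S.IsProjObj Q}, T0 Q ⟶ T1 Q)
    (hdata : ∀ Q : {Q : C // S.IsProjObj Q},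
      T1 Q ∈ T ∧ S.IsDeflation (d Q) ∧ S.IsConflation (i Q) (g Q) ∧
      LeftApprox T (d Q ≫ i Q) ∧
      (∀ h : T0 Q ⟶ T0 Q, (d Q ≫ i Q) ≫ h = d Q ≫ i Q → IsIso h)) :
    ∃ ρm : ∀ (Q Q' : {Q : C // S.IsProjObj Q}), ((Q : C) ⟶ (Q' : C)) → (K Q ⟶ K Q'),
      (∀ (Q Q' : {Q : C // S.IsProjObj Q}) (a : (Q : C) ⟶ (Q' : C)),
        d Q ≫ ρm Q Q' a = a ≫ d Q') ∧
      (∀ Q : {Q : C // S.IsProjObj Q}, ρm Q Q (𝟙 (Q : C)) = 𝟙 (K Q)) ∧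
      (∀ (Q Q' Q'' : {Q : C // S.IsProjObj Q}) (a : (Q : C) ⟶ (Q' : C))
          (b : (Q' : C) ⟶ (Q'' : C)), ρm Q Q'' (a ≫ b) = ρm Q Q' a ≫ ρm Q' Q'' b) ∧
      (∀ (Q Q' : {Q : C // S.IsProjObj Q}) (a b : (Q : C) ⟶ (Q' : C)),
        ρm Q Q' (a + b) = ρm Q Q' a + ρm Q Q' b) ∧
      (∀ (Q Q' : {Q : C // S.IsProjObj Q}) (a : (Q : C) ⟶ (Q' : C)),
        ρm Q Q' a = 0 ↔ ∀ T' ∈ T, ∀ u : (Q' : C) ⟶ T', a ≫ u = 0) ∧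
      (∀ Q : {Q : C // S.IsProjObj Q}, K Q ∈ S.PTset T) ∧
      (∀ (Q Q' : {Q : C // S.IsProjObj Q}) (b : K Q ⟶ K Q'),
        ∃ a : (Q : C) ⟶ (Q' : C), ρm Q Q' a = b) ∧
      (∀ X ∈ S.PTset T, ∃ Q : {Q : C // S.IsProjObj Q}, Nonempty (K Q ≅ X)) := by
  classical
  have hdQ : ∀ Q, S.IsDeflation (d Q) := fun Q => (hdata Q).2.1
  have hcf : ∀ Q, S.IsConflation (i Q) (g Q) := fun Q => (hdata Q).2.2.1
  have hap : ∀ Q, LeftApprox T (d Q ≫ i Q) := fun Q => (hdata Q).2.2.2.1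
  have hmin : ∀ Q (h : T0 Q ⟶ T0 Q), (d Q ≫ i Q) ≫ h = d Q ≫ i Q → IsIso h :=
    fun Q => (hdata Q).2.2.2.2
  have hT0 : ∀ Q, T0 Q ∈ T := fun Q => (hap Q).1
  have hepi : ∀ Q, Epi (d Q) := fun Q => RhoAux.epi_of_deflation hS (hdQ Q)
  have hmono : ∀ Q, Mono (i Q) := fun Q => RhoAux.mono_of_conf hS (hcf Q)
  have hig : ∀ Q, i Q ≫ g Q = 0 := fun Q => RhoAux.conf_zero hS (hcf Q)
  -- existence and uniqueness of the induced morphisms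
  have exist : ∀ (Q Q' : {Q : C // S.IsProjObj Q}) (a : (Q : C) ⟶ (Q' : C)),
      ∃ b : K Q ⟶ K Q', d Q ≫ b = a ≫ d Q' := by
    intro Q Q' a
    obtain ⟨v, hv⟩ := (hap Q).2 (T0 Q') (hT0 Q') (a ≫ (d Q' ≫ i Q'))
    haveI := hepi Q
    have hz : (i Q ≫ v) ≫ g Q' = 0 := by
      rw [← cancel_epi (d Q)]
      calc d Q ≫ (i Q ≫ v) ≫ g Q'
          = ((d Q ≫ i Q) ≫ v) ≫ g Q' := by simp only [Category.assoc]
        _ = (a ≫ (d Q' ≫ i Q')) ≫ g Q' := by rw [hv]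
        _ = a ≫ d Q' ≫ (i Q' ≫ g Q') := by simp only [Category.assoc]
        _ = d Q ≫ 0 := by rw [hig]; simp
    obtain ⟨l, hl⟩ := RhoAux.conf_lift hS (hcf Q') (i Q ≫ v) hz
    refine ⟨l, ?_⟩
    haveI := hmono Q'
    rw [← cancel_mono (i Q')]
    calc (d Q ≫ l) ≫ i Q' = d Q ≫ (l ≫ i Q') := by rw [Category.assoc]
      _ = (d Q ≫ i Q) ≫ v := by rw [hl]; simp only [Category.assoc]
      _ = a ≫ (d Q' ≫ i Q') := hv
      _ = (a ≫ d Q') ≫ i Q' := by simp only [Category.assoc]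
  set ρ : ∀ (Q Q' : {Q : C // S.IsProjObj Q}), ((Q : C) ⟶ (Q' : C)) → (K Q ⟶ K Q') :=
    fun Q Q' a => (exist Q Q' a).choose with hρdef
  have hρ : ∀ (Q Q' : {Q : C // S.IsProjObj Q}) (a : (Q : C) ⟶ (Q' : C)), d Q ≫ ρ Q Q' a = a ≫ d Q' := fun Q Q' a => (exist Q Q' a).choose_spec
  have huniq : ∀ (Q Q' : {Q : C // S.IsProjObj Q}) (a : (Q : C) ⟶ (Q' : C)) (b : K Q ⟶ K Q'),
      d Q ≫ b = a ≫ d Q' → ρ Q Q' a = b := by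
    intro Q Q' a b hb
    haveI := hepi Q
    rw [← cancel_epi (d Q), hρ, hb]
  have rho_id : ∀ (Q : {Q : C // S.IsProjObj Q}), ρ Q Q (𝟙 (Q : C)) = 𝟙 (K Q) := by
    intro Q
    apply huniq
    simp
  have rho_comp : ∀ (Q Q' Q'' : {Q : C // S.IsProjObj Q}) (a : (Q : C) ⟶ (Q' : C)) (b : (Q' : C) ⟶ (Q'' : C)),
      ρ Q Q'' (a ≫ b) = ρ Q Q' a ≫ ρ Q' Q'' b := by
    intro Q Q' Q'' a b
    apply huniq
    calc d Q ≫ ρ Q Q' a ≫ ρ Q' Q'' b = (a ≫ d Q') ≫ ρ Q' Q'' b := by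
          rw [← Category.assoc, hρ]
      _ = a ≫ (b ≫ d Q'') := by rw [Category.assoc, hρ]
      _ = (a ≫ b) ≫ d Q'' := by rw [Category.assoc]
  have rho_add : ∀ (Q Q' : {Q : C // S.IsProjObj Q}) (a b : (Q : C) ⟶ (Q' : C)),
      ρ Q Q' (a + b) = ρ Q Q' a + ρ Q Q' b := by
    intro Q Q' a b
    apply huniq
    rw [Preadditive.comp_add, hρ, hρ, ← Preadditive.add_comp]
  have rho_zero : ∀ (Q Q' : {Q : C // S.IsProjObj Q}), ρ Q Q' (0 : (Q : C) ⟶ (Q' : C)) = 0 := by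
    intro Q Q'
    apply huniq
    simp
  have rho_sub : ∀ (Q Q' : {Q : C // S.IsProjObj Q}) (a b : (Q : C) ⟶ (Q' : C)),
      ρ Q Q' (a - b) = ρ Q Q' a - ρ Q Q' b := by
    intro Q Q' a b
    apply huniq
    rw [Preadditive.comp_sub, hρ, hρ, ← Preadditive.sub_comp]
  have rho_iff : ∀ (Q Q' : {Q : C // S.IsProjObj Q}) (a : (Q : C) ⟶ (Q' : C)),
      ρ Q Q' a = 0 ↔ ∀ T' ∈ T, ∀ u : (Q' : C) ⟶ T', a ≫ u = 0 := by
    intro Q Q' a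
    constructor
    · intro h0 T' hT' u
      obtain ⟨w, hw⟩ := (hap Q').2 T' hT' u
      have hfa : a ≫ (d Q' ≫ i Q') = 0 := by
        calc a ≫ (d Q' ≫ i Q') = (a ≫ d Q') ≫ i Q' := by rw [Category.assoc]
          _ = (d Q ≫ ρ Q Q' a) ≫ i Q' := by rw [hρ]
          _ = 0 := by rw [h0]; simp
      calc a ≫ u = a ≫ (d Q' ≫ i Q') ≫ w := by rw [hw]
        _ = (a ≫ (d Q' ≫ i Q')) ≫ w := by simp only [Category.assoc]
        _ = 0 := by rw [hfa]; simp
    · intro hI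
      haveI := hepi Q
      haveI := hmono Q'
      rw [← cancel_epi (d Q), ← cancel_mono (i Q')]
      rw [Limits.comp_zero, Limits.zero_comp]
      calc (d Q ≫ ρ Q Q' a) ≫ i Q' = (a ≫ d Q') ≫ i Q' := by rw [hρ]
        _ = a ≫ (d Q' ≫ i Q') := by rw [Category.assoc]
        _ = 0 := hI (T0 Q') (hT0 Q') (d Q' ≫ i Q')
  have rho_full : ∀ (Q Q' : {Q : C // S.IsProjObj Q}) (b : K Q ⟶ K Q'), ∃ a : (Q : C) ⟶ (Q' : C), ρ Q Q' a = b := by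
    intro Q Q' b
    obtain ⟨a, ha⟩ := Q.2 (d Q') (hdQ Q') (d Q ≫ b)
    exact ⟨a, huniq _ _ _ _ ha.symm⟩
  -- the key lemma : images of arbitrary admissible left approximations agree with `K`
  have keylemma : ∀ (Q : {Q : C // S.IsProjObj Q}) (K' T0' : C) (d' : (Q : C) ⟶ K')
      (i' : K' ⟶ T0'), S.IsDeflation d' → S.IsInflation i' → LeftApprox T (d' ≫ i') →
      Nonempty (K' ≅ K Q) := by
    intro Q K' T0' d' i' hd' hi' hap'
    haveI := hepi Q
    haveI := hmono Q
    haveI hepi' : Epi d' := RhoAux.epi_of_deflation hS hd'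
    haveI hmono' : Mono i' := RhoAux.mono_of_inflation hS hi'
    obtain ⟨v, hv⟩ := (hap Q).2 T0' hap'.1 (d' ≫ i')
    obtain ⟨w, hw⟩ := hap'.2 (T0 Q) (hT0 Q) (d Q ≫ i Q)
    haveI hiso : IsIso (v ≫ w) := by
      apply hmin Q
      rw [← Category.assoc, hv, hw]
    set rr : T0' ⟶ T0 Q := w ≫ inv (v ≫ w) with hrr
    have hvr : v ≫ rr = 𝟙 (T0 Q) := by
      rw [hrr, ← Category.assoc, IsIso.hom_inv_id]
    have hfr : (d' ≫ i') ≫ rr = d Q ≫ i Q := by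
      calc (d' ≫ i') ≫ rr = ((d Q ≫ i Q) ≫ v) ≫ rr := by rw [hv]
        _ = (d Q ≫ i Q) ≫ (v ≫ rr) := by rw [Category.assoc]
        _ = d Q ≫ i Q := by rw [hvr, Category.comp_id]
    have hz1 : (i' ≫ rr) ≫ g Q = 0 := by
      rw [← cancel_epi d']
      calc d' ≫ (i' ≫ rr) ≫ g Q = ((d' ≫ i') ≫ rr) ≫ g Q := by simp only [Category.assoc]
        _ = (d Q ≫ i Q) ≫ g Q := by rw [hfr]
        _ = d Q ≫ (i Q ≫ g Q) := by rw [Category.assoc]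
        _ = d' ≫ 0 := by rw [hig]; simp
    obtain ⟨φ, hφ⟩ := RhoAux.conf_lift hS (hcf Q) (i' ≫ rr) hz1
    obtain ⟨Zc, g', hcf'⟩ := hi'
    have hz2 : (i Q ≫ v) ≫ g' = 0 := by
      rw [← cancel_epi (d Q)]
      calc d Q ≫ (i Q ≫ v) ≫ g' = ((d Q ≫ i Q) ≫ v) ≫ g' := by simp only [Category.assoc]
        _ = (d' ≫ i') ≫ g' := by rw [hv]
        _ = d' ≫ (i' ≫ g') := by rw [Category.assoc]
        _ = d Q ≫ 0 := by rw [RhoAux.conf_zero hS hcf']; simp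
    obtain ⟨ψ, hψ⟩ := RhoAux.conf_lift hS hcf' (i Q ≫ v) hz2
    have hdφ : d' ≫ φ = d Q := by
      rw [← cancel_mono (i Q)]
      calc (d' ≫ φ) ≫ i Q = d' ≫ (φ ≫ i Q) := by rw [Category.assoc]
        _ = d' ≫ (i' ≫ rr) := by rw [hφ]
        _ = (d' ≫ i') ≫ rr := by rw [Category.assoc]
        _ = d Q ≫ i Q := hfr
    have hdψ : d Q ≫ ψ = d' := by
      rw [← cancel_mono i']
      calc (d Q ≫ ψ) ≫ i' = d Q ≫ (ψ ≫ i') := by rw [Category.assoc]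
        _ = d Q ≫ (i Q ≫ v) := by rw [hψ]
        _ = (d Q ≫ i Q) ≫ v := by rw [Category.assoc]
        _ = d' ≫ i' := hv
    have hφψ : φ ≫ ψ = 𝟙 K' := by
      rw [← cancel_epi d', ← Category.assoc, hdφ, hdψ, Category.comp_id]
    have hψφ : ψ ≫ φ = 𝟙 (K Q) := by
      rw [← cancel_epi (d Q), ← Category.assoc, hdψ, hdφ, Category.comp_id]
    exact ⟨⟨φ, ψ, hφψ, hψφ⟩⟩
  -- `ρ` of an isomorphism of projectives
  have Kiso : ∀ (Q Q' : {Q : C // S.IsProjObj Q}), ((Q : C) ≅ (Q' : C)) →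
      Nonempty (K Q ≅ K Q') := by
    intro Q Q' e
    refine ⟨⟨ρ Q Q' e.hom, ρ Q' Q e.inv, ?_, ?_⟩⟩
    · rw [← rho_comp, e.hom_inv_id, rho_id]
    · rw [← rho_comp, e.inv_hom_id, rho_id]
  -- `K` of a finite biproduct of projectives
  have Kbiprod : ∀ (n : ℕ) (W : Fin n → {Q : C // S.IsProjObj Q}),
      Nonempty (K ⟨⨁ (fun j => ((W j : C))), RhoAux.proj_biproduct (S := S) _ (fun j => (W j).2)⟩
        ≅ ⨁ fun j => K (W j)) := by
    intro n W
    set Qb : {Q : C // S.IsProjObj Q} :=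
      ⟨⨁ (fun j => ((W j : C))), RhoAux.proj_biproduct (S := S) _ (fun j => (W j).2)⟩ with hQb
    set φ : (⨁ fun j => K (W j)) ⟶ K Qb :=
      biproduct.desc (fun j => ρ (W j) Qb (biproduct.ι (fun j' => ((W j' : C))) j)) with hφ
    set ψ : K Qb ⟶ (⨁ fun j => K (W j)) :=
      biproduct.lift (fun j => ρ Qb (W j) (biproduct.π (fun j' => ((W j' : C))) j)) with hψ
    have hψφ : ψ ≫ φ = 𝟙 (K Qb) := by
      haveI := hepi Qb
      rw [← cancel_epi (d Qb), Category.comp_id]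
      have hdψ : d Qb ≫ ψ = biproduct.lift
          (fun j => biproduct.π (fun j' => ((W j' : C))) j ≫ d (W j)) := by
        apply biproduct.hom_ext
        intro j
        rw [Category.assoc, hψ, biproduct.lift_π, biproduct.lift_π, hρ]
      rw [← Category.assoc, hdψ, hφ, biproduct.lift_desc]
      have hterm : ∀ j, (biproduct.π (fun j' => ((W j' : C))) j ≫ d (W j)) ≫
          ρ (W j) Qb (biproduct.ι (fun j' => ((W j' : C))) j)
          = (biproduct.π (fun j' => ((W j' : C))) j ≫
            biproduct.ι (fun j' => ((W j' : C))) j) ≫ d Qb := by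
        intro j
        simp only [Category.assoc]
        rw [hρ]
      rw [Finset.sum_congr rfl (fun j _ => hterm j), ← Preadditive.sum_comp,
        show (∑ j : Fin n, biproduct.π (fun j' => ((W j' : C))) j ≫
          biproduct.ι (fun j' => ((W j' : C))) j) = 𝟙 _ from biproduct.total,
        Category.id_comp]
    have hφψ : φ ≫ ψ = 𝟙 (⨁ fun j => K (W j)) := by
      apply biproduct.hom_ext'
      intro j
      apply biproduct.hom_ext
      intro k
      have hgoal : ρ (W j) Qb (biproduct.ι (fun j' => ((W j' : C))) j)
          ≫ ρ Qb (W k) (biproduct.π (fun j' => ((W j' : C))) k)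
          = biproduct.ι (fun j' => K (W j')) j ≫ biproduct.π (fun j' => K (W j')) k := by
        rw [← rho_comp]
        by_cases h : j = k
        · subst h
          rw [biproduct.ι_π_self, biproduct.ι_π_self, rho_id]
        · rw [biproduct.ι_π_ne _ h, biproduct.ι_π_ne _ h, rho_zero]
      simp only [hφ, hψ, Category.comp_id, Category.assoc, biproduct.ι_desc_assoc,
        biproduct.lift_π]
      exact hgoal
    exact ⟨⟨ψ, φ, hψφ, hφψ⟩⟩
  refine ⟨ρ, hρ, rho_id, rho_comp, rho_add, rho_iff, ?_, rho_full, ?_⟩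
  · -- K Q ∈ PTset T
    intro Q
    refine ⟨1, fun _ => K Q, ?_, ?_⟩
    · intro j
      exact ⟨(Q : C), T0 Q, d Q, i Q, Q.2, hdQ Q, ⟨T1 Q, g Q, hcf Q⟩, hap Q⟩
    · refine ⟨biproduct.lift (fun _ => 𝟙 (K Q)), biproduct.π _ 0, ?_⟩
      simp
  · -- density
    intro X hX
    obtain ⟨n, κ, hκ, iX, rX, hXr⟩ := hX
    choose Qo T0o do' io hprojo hdeflo hinflo happo using hκ
    set W : Fin n → {Q : C // S.IsProjObj Q} := fun j => ⟨Qo j, hprojo j⟩ with hW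
    have keyiso : ∀ j, Nonempty (κ j ≅ K (W j)) := fun j =>
      keylemma (W j) (κ j) (T0o j) (do' j) (io j) (hdeflo j) (hinflo j) (happo j)
    set isoκ : (⨁ κ) ≅ ⨁ fun j => K (W j) :=
      biproduct.mapIso (fun j => (keyiso j).some) with hisoκ
    set Pb : {Q : C // S.IsProjObj Q} :=
      ⟨⨁ (fun j => ((W j : C))), RhoAux.proj_biproduct (S := S) _ (fun j => (W j).2)⟩ with hPb
    obtain ⟨isoKb⟩ := Kbiprod n W
    -- X is a retract of K Pb
    set s1 : X ⟶ K Pb := iX ≫ isoκ.hom ≫ isoKb.inv with hs1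
    set r1 : K Pb ⟶ X := isoKb.hom ≫ isoκ.inv ≫ rX with hr1
    have hsr1 : s1 ≫ r1 = 𝟙 X := by
      rw [hs1, hr1]
      simp only [Category.assoc, Iso.inv_hom_id_assoc, Iso.hom_inv_id_assoc]
      exact hXr
    -- Krull-Schmidt decomposition of Pb
    obtain ⟨M, Zf, hlocZ, ⟨isoZ⟩⟩ := hKS (Pb : C)
    have hZproj : ∀ l, S.IsProjObj (Zf l) := by
      intro l
      refine RhoAux.proj_of_retract (S := S) Pb.2
        (biproduct.ι Zf l ≫ isoZ.inv) (isoZ.hom ≫ biproduct.π Zf l) ?_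
      rw [Category.assoc, ← Category.assoc isoZ.inv isoZ.hom, Iso.inv_hom_id,
        Category.id_comp, biproduct.ι_π_self]
    set Zs : Fin M → {Q : C // S.IsProjObj Q} := fun l => ⟨Zf l, hZproj l⟩ with hZs
    have hZb : S.IsProjObj (⨁ fun l => ((Zs l : C))) :=
      RhoAux.proj_biproduct (S := S) _ (fun l => (Zs l).2)
    obtain ⟨isoKZ⟩ := Kiso Pb ⟨⨁ fun l => ((Zs l : C)), hZb⟩ isoZ
    obtain ⟨isoKZb⟩ := Kbiprod M Zs
    -- X is a retract of ⨁ K (Zs l)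
    set s2 : X ⟶ ⨁ fun l => K (Zs l) := s1 ≫ isoKZ.hom ≫ isoKZb.hom with hs2
    set r2 : (⨁ fun l => K (Zs l)) ⟶ X := isoKZb.inv ≫ isoKZ.inv ≫ r1 with hr2
    have hsr2 : s2 ≫ r2 = 𝟙 X := by
      rw [hs2, hr2]
      simp only [Category.assoc, Iso.hom_inv_id_assoc]
      exact hsr1
    -- local-or-zero endomorphism rings for the K (Zs l)
    have hlocK : ∀ l, IsLocalRing (End (K (Zs l))) ∨ 𝟙 (K (Zs l)) = 0 := by
      intro l
      refine RhoAux.locOrZero_transfer (fun a => ρ (Zs l) (Zs l) a) (rho_id _) ?_ ?_ ?_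
        (Or.inl (hlocZ l))
      · intro a b; exact rho_comp _ _ _ a b
      · intro a b; exact rho_sub _ _ a b
      · intro b; exact rho_full _ _ b
    -- move to the Karoubi envelope and apply the exchange lemma
    set F := CategoryTheory.Idempotents.toKaroubi C with hF
    obtain ⟨cmp⟩ : Nonempty (F.obj (⨁ fun l => K (Zs l)) ≅ ⨁ fun l => F.obj (K (Zs l))) :=
      ⟨RhoAux.functorBiproductIso F _⟩
    have hlocF : ∀ l, IsLocalRing (End (F.obj (K (Zs l)))) ∨ 𝟙 (F.obj (K (Zs l))) = 0 := by
      intro l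
      refine RhoAux.locOrZero_transfer (fun a => F.map a) (F.map_id _) ?_ ?_ ?_ (hlocK l)
      · intro a b; exact F.map_comp a b
      · intro a b; exact F.map_sub
      · exact F.map_surjective
    have hsrF : (F.map s2 ≫ cmp.hom) ≫ (cmp.inv ≫ F.map r2) = 𝟙 (F.obj X) := by
      rw [Category.assoc, ← Category.assoc cmp.hom cmp.inv (F.map r2), Iso.hom_inv_id,
        Category.id_comp, ← F.map_comp, hsr2, F.map_id]
    obtain ⟨k, gsel, ⟨isoF⟩⟩ := RhoAux.azumaya_retract M (fun l => F.obj (K (Zs l))) hlocF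
      (F.obj X) (F.map s2 ≫ cmp.hom) (cmp.inv ≫ F.map r2) hsrF
    obtain ⟨cmp2⟩ : Nonempty (F.obj (⨁ fun l => K (Zs (gsel l)))
        ≅ ⨁ fun l => F.obj (K (Zs (gsel l)))) := ⟨RhoAux.functorBiproductIso F _⟩
    have isoC : X ≅ ⨁ fun l => K (Zs (gsel l)) :=
      F.preimageIso (isoF ≪≫ cmp2.symm)
    -- finally, identify ⨁ K (Zs (gsel l)) with K of a projective
    set Qfin : {Q : C // S.IsProjObj Q} :=
      ⟨⨁ (fun l => ((Zs (gsel l) : C))),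
        RhoAux.proj_biproduct (S := S) _ (fun l => (Zs (gsel l)).2)⟩ with hQfin
    obtain ⟨isoKfin⟩ := Kbiprod k (fun l => Zs (gsel l))
    exact ⟨Qfin, ⟨isoKfin ≪≫ isoC.symm⟩⟩

end TauTilting
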